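/- Finite-dimensional positive-real (passivity) lemma (Theorem 2): Let A ∈ ℝ^{n×n}, B ∈ ℝ^{n×m}, C ∈ ℝ^{m×n}, D ∈ ℝ^{m×m}. Suppose there exists a symmetric positive definite matrix P ∈ ℝ^{n×n} such that the symmetric block matrix [[AᵀP + PA, PB − Cᵀ], [BᵀP − C, −(D + Dᵀ)]] is negative semidefinite. Let w : [0,∞) → ℝ^m be continuous, let x : [0,∞) → ℝⁿ be continuously differentiable with x(0) = 0 and x'(t) = Ax(t) + Bw(t) for all t ≥ 0, and set y(t) := Cx(t) + Dw(t). Then ∫₀^T w(t)ᵀy(t) dt ≥ 0 for every T ≥ 0; in particular, if t ↦ w(t)ᵀy(t) is integrable on [0,∞), then ∫₀^∞ w(t)ᵀy(t) dt ≥ 0. -/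

import Mathlib

open Matrix MeasureTheory

noncomputable section

lemma aux_contOn_dot {k : ℕ} {s : Set ℝ} {u v : ℝ → Fin k → ℝ}
    (hu : ContinuousOn u s) (hv : ContinuousOn v s) :
    ContinuousOn (fun t => u t ⬝ᵥ v t) s := by
  simp only [dotProduct]
  refine continuousOn_finset_sum _ fun i _ => ?_
  exact ((continuous_apply i).comp_continuousOn hu).mul
    ((continuous_apply i).comp_continuousOn hv)

lemma aux_contOn_mulVec {k l : ℕ} {s : Set ℝ} (M : Matrix (Fin k) (Fin l) ℝ)
    {u : ℝ → Fin l → ℝ} (hu : ContinuousOn u s) :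
    ContinuousOn (fun t => M *ᵥ u t) s := by
  refine continuousOn_pi.2 fun i => ?_
  simp only [mulVec, dotProduct]
  refine continuousOn_finset_sum _ fun j _ => ?_
  exact continuousOn_const.mul ((continuous_apply j).comp_continuousOn hu)

theorem positive_real_lemma_time_domain
    (n m : ℕ)
    (A : Matrix (Fin n) (Fin n) ℝ) (B : Matrix (Fin n) (Fin m) ℝ)
    (C : Matrix (Fin m) (Fin n) ℝ) (D : Matrix (Fin m) (Fin m) ℝ)
    (P : Matrix (Fin n) (Fin n) ℝ) (hP : P.PosDef)
    (hLMI : ∀ ζ : Fin n ⊕ Fin m → ℝ,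
      ζ ⬝ᵥ ((Matrix.fromBlocks
          (Aᵀ * P + P * A) (P * B - Cᵀ)
          (Bᵀ * P - C) (-(D + Dᵀ))) *ᵥ ζ) ≤ 0)
    (w : ℝ → Fin m → ℝ) (hw : Continuous w)
    (x : ℝ → Fin n → ℝ) (hx0 : x 0 = 0)
    (hx : ∀ t : ℝ, 0 ≤ t →
      HasDerivWithinAt x (A *ᵥ x t + B *ᵥ w t) (Set.Ici (0:ℝ)) t)
    (y : ℝ → Fin m → ℝ)
    (hy : ∀ t : ℝ, 0 ≤ t → y t = C *ᵥ x t + D *ᵥ w t) :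
    (∀ T : ℝ, 0 ≤ T → 0 ≤ ∫ t in (0:ℝ)..T, w t ⬝ᵥ y t) ∧
      (IntegrableOn (fun t => w t ⬝ᵥ y t) (Set.Ioi (0:ℝ)) →
        0 ≤ ∫ t in Set.Ioi (0:ℝ), w t ⬝ᵥ y t) := by
  set f : ℝ → ℝ := fun t => w t ⬝ᵥ (C *ᵥ x t + D *ᵥ w t) with hfdef
  set V : ℝ → ℝ := fun t => x t ⬝ᵥ (P *ᵥ x t) with hVdef
  set V' : ℝ → ℝ := fun t =>
    (A *ᵥ x t + B *ᵥ w t) ⬝ᵥ (P *ᵥ x t) + x t ⬝ᵥ (P *ᵥ (A *ᵥ x t + B *ᵥ w t)) with hV'def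
  have hxC : ContinuousOn x (Set.Ici (0:ℝ)) := fun t ht => (hx t ht).continuousWithinAt
  -- derivative of V
  have hVd : ∀ t ∈ Set.Ici (0:ℝ), HasDerivWithinAt V (V' t) (Set.Ici (0:ℝ)) t := by
    intro t ht
    have hco : ∀ i, HasDerivWithinAt (fun s => x s i)
        ((A *ᵥ x t + B *ᵥ w t) i) (Set.Ici (0:ℝ)) t :=
      (hasDerivWithinAt_pi.mp (hx t ht))
    have hPx : ∀ i, HasDerivWithinAt (fun s => (P *ᵥ x s) i)
        ((P *ᵥ (A *ᵥ x t + B *ᵥ w t)) i) (Set.Ici (0:ℝ)) t := by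
      intro i
      simp only [mulVec, dotProduct]
      exact HasDerivWithinAt.fun_sum fun j _ => (hco j).const_mul (P i j)
    have : HasDerivWithinAt (fun s => ∑ i, x s i * (P *ᵥ x s) i)
        (∑ i, ((A *ᵥ x t + B *ᵥ w t) i * (P *ᵥ x t) i
            + x t i * (P *ᵥ (A *ᵥ x t + B *ᵥ w t)) i)) (Set.Ici (0:ℝ)) t :=
      HasDerivWithinAt.fun_sum fun i _ => (hco i).mul (hPx i)
    simpa [hVdef, hV'def, dotProduct, Finset.sum_add_distrib] using this
  -- pointwise bound V' ≤ 2 f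
  have hkey : ∀ t : ℝ, V' t ≤ 2 * f t := by
    intro t
    have h := hLMI (Sum.elim (x t) (w t))
    have e1 : x t ⬝ᵥ (Aᵀ *ᵥ (P *ᵥ x t)) = (A *ᵥ x t) ⬝ᵥ (P *ᵥ x t) := by
      rw [Matrix.dotProduct_mulVec, Matrix.vecMul_transpose]
    have e2 : x t ⬝ᵥ (Cᵀ *ᵥ w t) = (C *ᵥ x t) ⬝ᵥ w t := by
      rw [Matrix.dotProduct_mulVec, Matrix.vecMul_transpose]
    have e3 : w t ⬝ᵥ (Dᵀ *ᵥ w t) = w t ⬝ᵥ (D *ᵥ w t) := by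
      rw [Matrix.dotProduct_mulVec, Matrix.vecMul_transpose, dotProduct_comm]
    have e4 : (C *ᵥ x t) ⬝ᵥ w t = w t ⬝ᵥ (C *ᵥ x t) := dotProduct_comm _ _
    have e5 : w t ⬝ᵥ (Bᵀ *ᵥ (P *ᵥ x t)) = (B *ᵥ w t) ⬝ᵥ (P *ᵥ x t) := by
      rw [Matrix.dotProduct_mulVec, Matrix.vecMul_transpose]
    simp only [Matrix.fromBlocks_mulVec, Sum.elim_comp_inl, Sum.elim_comp_inr,
      Matrix.add_mulVec, Matrix.sub_mulVec, Matrix.neg_mulVec, Matrix.mulVec_add,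
      sumElim_dotProduct_sumElim, ← Matrix.mulVec_mulVec,
      dotProduct_add, dotProduct_sub, dotProduct_neg,
      add_dotProduct, sub_dotProduct, neg_dotProduct] at h
    simp only [hV'def, hfdef, Matrix.mulVec_add, dotProduct_add, add_dotProduct]
    linarith [h, e1, e2, e3, e4, e5]
  -- continuity
  have hV'cont : ContinuousOn V' (Set.Ici (0:ℝ)) := by
    have hxw : ContinuousOn (fun t => A *ᵥ x t + B *ᵥ w t) (Set.Ici (0:ℝ)) :=
      (aux_contOn_mulVec A hxC).add (aux_contOn_mulVec B hw.continuousOn)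
    exact (aux_contOn_dot hxw (aux_contOn_mulVec P hxC)).add
      (aux_contOn_dot hxC (aux_contOn_mulVec P hxw))
  have hfcont : ContinuousOn f (Set.Ici (0:ℝ)) :=
    aux_contOn_dot hw.continuousOn
      ((aux_contOn_mulVec C hxC).add (aux_contOn_mulVec D hw.continuousOn))
  -- main bound on [0,T]
  have hmain : ∀ T : ℝ, 0 ≤ T → 0 ≤ ∫ t in (0:ℝ)..T, f t := by
    intro T hT
    have hIccV' : IntervalIntegrable V' volume 0 T :=
      (hV'cont.mono (by rw [Set.uIcc_of_le hT]; exact Set.Icc_subset_Ici_self)).intervalIntegrable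
    have hIccf : IntervalIntegrable (fun t => 2 * f t) volume 0 T :=
      ((hfcont.mono (by rw [Set.uIcc_of_le hT]; exact Set.Icc_subset_Ici_self)).const_smul
        (2:ℝ)).intervalIntegrable
    have hFTC : ∫ t in (0:ℝ)..T, V' t = V T - V 0 := by
      refine intervalIntegral.integral_eq_sub_of_hasDeriv_right_of_le hT
        (fun t ht => ((hVd t (Set.mem_of_mem_of_subset ht Set.Icc_subset_Ici_self)).continuousWithinAt).mono Set.Icc_subset_Ici_self)
        (fun t ht => (hVd t (le_of_lt ht.1)).mono fun s hs => le_of_lt (ht.1.trans hs))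
        hIccV'
    have hV0 : V 0 = 0 := by simp [hVdef, hx0]
    have hVT : 0 ≤ V T := by
      have := hP.posSemidef.dotProduct_mulVec_nonneg (x T)
      simp only [hVdef]; simpa using this
    have hle : ∫ t in (0:ℝ)..T, V' t ≤ ∫ t in (0:ℝ)..T, 2 * f t :=
      intervalIntegral.integral_mono_on hT hIccV' hIccf fun t _ => hkey t
    have h2f : ∫ t in (0:ℝ)..T, 2 * f t = 2 * ∫ t in (0:ℝ)..T, f t := by
      exact intervalIntegral.integral_const_mul (2:ℝ) f
    nlinarith [hle, hFTC, hV0, hVT, h2f]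
  have hpart1 : ∀ T : ℝ, 0 ≤ T → 0 ≤ ∫ t in (0:ℝ)..T, w t ⬝ᵥ y t := by
    intro T hT
    have : ∫ t in (0:ℝ)..T, w t ⬝ᵥ y t = ∫ t in (0:ℝ)..T, f t := by
      refine intervalIntegral.integral_congr fun t ht => ?_
      rw [Set.uIcc_of_le hT] at ht
      simp [hfdef, hy t ht.1]
    rw [this]; exact hmain T hT
  refine ⟨hpart1, fun hInt => ?_⟩
  have htend := intervalIntegral_tendsto_integral_Ioi (0:ℝ) hInt Filter.tendsto_id
  refine ge_of_tendsto htend ?_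
  filter_upwards [Filter.eventually_ge_atTop (0:ℝ)] with T hT
  exact hpart1 T hT
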